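/- Let m₁₁⁺, m₁₁⁻, m₁₂⁺, m₁₂⁻, m₂₁⁺, m₂₁⁻ be arbitrary real numbers. Define a_±(θ) = (e^{m₁₁⁺θ} ± e^{m₁₁⁻θ})/2, b_±(θ) = (e^{m₁₂⁺θ} ± e^{m₁₂⁻θ})/2, c_±(θ) = (e^{m₂₁⁺θ} ± e^{m₂₁⁻θ})/2, and let R̂(θ) be the 9×9 matrix with rows [a₊,0,0,0,0,0,0,0,a₋], [0,b₊,0,0,0,0,0,b₋,0], [0,0,a₊,0,0,0,a₋,0,0], [0,0,0,c₊,0,c₋,0,0,0], [0,0,0,0,1,0,0,0,0], [0,0,0,c₋,0,c₊,0,0,0], [0,0,a₋,0,0,0,a₊,0,0], [0,b₋,0,0,0,0,0,b₊,0], [a₋,0,0,0,0,0,0,0,a₊]. Then R̂ satisfies the braid equation R̂₁₂(θ) R̂₂₃(θ+θ′) R̂₁₂(θ′) = R̂₂₃(θ′) R̂₁₂(θ+θ′) R̂₂₃(θ) for all real θ, θ′, where R̂₁₂(θ) = R̂(θ)⊗I₃ and R̂₂₃(θ) = I₃⊗R̂(θ) as 27×27 matrices. -/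

import Mathlib

open Matrix Kronecker

/-- The 9×9 braid matrix `R̂(θ)` of the `N = 3` case, written on the index set
`Fin 3 × Fin 3` (0-based pairs, ordered lexicographically as the rows/columns of
the 9×9 matrix).  Its nonzero entries sit on the diagonal and the antidiagonal:
`a₊,b₊,a₊,c₊,1,c₊,a₊,b₊,a₊` on the diagonal and `a₋,b₋,a₋,c₋,·,c₋,a₋,b₋,a₋` on
the antidiagonal, where
`a_±(θ) = (e^{m₁₁⁺θ} ± e^{m₁₁⁻θ})/2`, `b_±(θ) = (e^{m₁₂⁺θ} ± e^{m₁₂⁻θ})/2`,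
`c_±(θ) = (e^{m₂₁⁺θ} ± e^{m₂₁⁻θ})/2`. -/
noncomputable def Rhat (m11p m11m m12p m12m m21p m21m : ℝ) (θ : ℝ) :
    Matrix (Fin 3 × Fin 3) (Fin 3 × Fin 3) ℝ :=
  let aP : ℝ := (Real.exp (m11p*θ) + Real.exp (m11m*θ))/2
  let aM : ℝ := (Real.exp (m11p*θ) - Real.exp (m11m*θ))/2
  let bP : ℝ := (Real.exp (m12p*θ) + Real.exp (m12m*θ))/2
  let bM : ℝ := (Real.exp (m12p*θ) - Real.exp (m12m*θ))/2
  let cP : ℝ := (Real.exp (m21p*θ) + Real.exp (m21m*θ))/2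
  let cM : ℝ := (Real.exp (m21p*θ) - Real.exp (m21m*θ))/2
  fun x y =>
    if y = x then
      (if x = ((1, 1) : Fin 3 × Fin 3) then 1
       else if x.1 = 1 then cP else if x.2 = 1 then bP else aP)
    else if y = (2 - x.1, 2 - x.2) then
      (if x.1 = 1 then cM else if x.2 = 1 then bM else aM)
    else 0

/-- Association equivalence `(V⊗V)⊗V ≃ V⊗(V⊗V)` on index sets. -/
def assoc3 : (Fin 3 × Fin 3) × Fin 3 ≃ Fin 3 × Fin 3 × Fin 3 :=
  Equiv.prodAssoc _ _ _

/-- `R̂₁₂(θ) = R̂(θ) ⊗ I₃` as a 27×27 matrix. -/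
noncomputable def R12 (m11p m11m m12p m12m m21p m21m θ : ℝ) :
    Matrix (Fin 3 × Fin 3 × Fin 3) (Fin 3 × Fin 3 × Fin 3) ℝ :=
  Matrix.reindex assoc3 assoc3
    (Rhat m11p m11m m12p m12m m21p m21m θ ⊗ₖ (1 : Matrix (Fin 3) (Fin 3) ℝ))

/-- `R̂₂₃(θ) = I₃ ⊗ R̂(θ)` as a 27×27 matrix. -/
noncomputable def R23 (m11p m11m m12p m12m m21p m21m θ : ℝ) :
    Matrix (Fin 3 × Fin 3 × Fin 3) (Fin 3 × Fin 3 × Fin 3) ℝ :=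
  (1 : Matrix (Fin 3) (Fin 3) ℝ) ⊗ₖ Rhat m11p m11m m12p m12m m21p m21m θ

/-! ### Auxiliary machinery -/

set_option linter.unusedSectionVars false
set_option linter.unreachableTactic false
set_option linter.unusedTactic false

/-- The generic (parameter-abstracted) form of the braid matrix. -/
def Mgen (aP aM bP bM cP cM : ℝ) : Matrix (Fin 3 × Fin 3) (Fin 3 × Fin 3) ℝ :=
  fun x y =>
    if y = x then
      (if x = ((1, 1) : Fin 3 × Fin 3) then 1
       else if x.1 = 1 then cP else if x.2 = 1 then bP else aP)
    else if y = (2 - x.1, 2 - x.2) then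
      (if x.1 = 1 then cM else if x.2 = 1 then bM else aM)
    else 0

/-- Row-permutation matrix of a permutation. -/
def Pm {n : Type*} [DecidableEq n] (e : Equiv.Perm n) : Matrix n n ℝ :=
  fun x y => if y = e x then 1 else 0

section PmLemmas
variable {n : Type*} [Fintype n] [DecidableEq n]

lemma Pm_mul_Pm (e f : Equiv.Perm n) : Pm e * Pm f = Pm (e.trans f) := by
  ext x y
  rw [Matrix.mul_apply, Finset.sum_eq_single (e x)]
  · simp [Pm]; rfl
  · intro b _ hb; simp [Pm, hb]
  · simp

lemma Pm_one : Pm (Equiv.refl n) = 1 := by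
  ext x y
  simp [Pm, Matrix.one_apply, eq_comm]

lemma Pm_mul_diagonal (e : Equiv.Perm n) (d : n → ℝ) (h : ∀ x, d (e x) = d x) :
    Pm e * Matrix.diagonal d = Matrix.diagonal d * Pm e := by
  ext x y
  rw [Matrix.mul_diagonal, Matrix.diagonal_mul]
  by_cases hy : y = e x
  · subst hy; simp [Pm, h]
  · simp [Pm, hy]

lemma commute_diagonal_Pm (e : Equiv.Perm n) (d : n → ℝ) (h : ∀ x, d (e x) = d x) :
    Commute (Matrix.diagonal d) (Pm e) := (Pm_mul_diagonal e d h).symm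

end PmLemmas

section helpers
variable {m n : Type*} [Fintype m] [Fintype n] [DecidableEq m] [DecidableEq n]

lemma reindex_add (e : m ≃ n) (A B : Matrix m m ℝ) :
    Matrix.reindex e e (A + B) = Matrix.reindex e e A + Matrix.reindex e e B := by
  ext x y; simp

lemma reindex_mul (e : m ≃ n) (A B : Matrix m m ℝ) :
    Matrix.reindex e e (A * B) = Matrix.reindex e e A * Matrix.reindex e e B := by
  simp [Matrix.reindex_apply, Matrix.submatrix_mul_equiv]

lemma diag_comm (d d' : m → ℝ) :
    Commute (Matrix.diagonal d) (Matrix.diagonal d') := by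
  unfold Commute SemiconjBy
  rw [Matrix.diagonal_mul_diagonal, Matrix.diagonal_mul_diagonal]
  exact congrArg Matrix.diagonal (funext fun i => mul_comm (d i) (d' i))
end helpers

/-! ### The concrete permutations and diagonal data -/

def S2 : Equiv.Perm (Fin 3 × Fin 3) :=
  ⟨fun x => (2 - x.1, 2 - x.2), fun x => (2 - x.1, 2 - x.2), by decide, by decide⟩
def S12 : Equiv.Perm (Fin 3 × Fin 3 × Fin 3) :=
  ⟨fun x => (2 - x.1, 2 - x.2.1, x.2.2), fun x => (2 - x.1, 2 - x.2.1, x.2.2), by decide, by decide⟩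
def S23 : Equiv.Perm (Fin 3 × Fin 3 × Fin 3) :=
  ⟨fun x => (x.1, 2 - x.2.1, 2 - x.2.2), fun x => (x.1, 2 - x.2.1, 2 - x.2.2), by decide, by decide⟩

lemma S12_trans_S23 : S12.trans S23 = S23.trans S12 := rfl
lemma S12_trans_S12 : S12.trans S12 = Equiv.refl _ := by
  apply Equiv.coe_fn_injective; funext x; revert x; decide
lemma S23_trans_S23 : S23.trans S23 = Equiv.refl _ := by
  apply Equiv.coe_fn_injective; funext x; revert x; decide

def Gd (p q r : ℝ) : Fin 3 × Fin 3 → ℝ := fun x =>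
  if x = ((1,1) : Fin 3 × Fin 3) then 1 else if x.1 = 1 then r else if x.2 = 1 then q else p
def Hd (p q r : ℝ) : Fin 3 × Fin 3 → ℝ := fun x =>
  if x = ((1,1) : Fin 3 × Fin 3) then 0 else if x.1 = 1 then r else if x.2 = 1 then q else p

lemma Gd_flip1 (p q r : ℝ) (i j : Fin 3) : Gd p q r (2 - i, j) = Gd p q r (i, j) := by
  fin_cases i <;> fin_cases j <;> rfl
lemma Gd_flip2 (p q r : ℝ) (i j : Fin 3) : Gd p q r (i, 2 - j) = Gd p q r (i, j) := by
  fin_cases i <;> fin_cases j <;> rfl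
lemma Hd_flip1 (p q r : ℝ) (i j : Fin 3) : Hd p q r (2 - i, j) = Hd p q r (i, j) := by
  fin_cases i <;> fin_cases j <;> rfl
lemma Hd_flip2 (p q r : ℝ) (i j : Fin 3) : Hd p q r (i, 2 - j) = Hd p q r (i, j) := by
  fin_cases i <;> fin_cases j <;> rfl

/-! ### Structure of the generic braid matrix -/

lemma Mgen_decomp (aP aM bP bM cP cM : ℝ) :
    Mgen aP aM bP bM cP cM =
      Matrix.diagonal (Gd aP bP cP) + Matrix.diagonal (Hd aM bM cM) * Pm S2 := by
  ext x y
  rw [Matrix.add_apply, Matrix.diagonal_mul, Matrix.diagonal_apply]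
  fin_cases x <;> fin_cases y <;> simp [Mgen, Gd, Hd, Pm, S2, Prod.ext_iff, Fin.ext_iff]

lemma Mgen_apply (aP aM bP bM cP cM : ℝ) (x y : Fin 3 × Fin 3) :
    Mgen aP aM bP bM cP cM x y =
      if y = x then
        (if x = ((1, 1) : Fin 3 × Fin 3) then 1
         else if x.1 = 1 then cP else if x.2 = 1 then bP else aP)
      else if y = (2 - x.1, 2 - x.2) then
        (if x.1 = 1 then cM else if x.2 = 1 then bM else aM)
      else 0 := rfl

set_option maxHeartbeats 2000000 in
lemma Mgen_mul (aP aM bP bM cP cM aP' aM' bP' bM' cP' cM' : ℝ) :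
    Mgen aP aM bP bM cP cM * Mgen aP' aM' bP' bM' cP' cM' =
      Mgen (aP*aP'+aM*aM') (aP*aM'+aM*aP') (bP*bP'+bM*bM') (bP*bM'+bM*bP')
        (cP*cP'+cM*cM') (cP*cM'+cM*cP') := by
  ext x y
  rw [Matrix.mul_apply]
  fin_cases x <;> fin_cases y <;>
    simp only [Fintype.sum_prod_type, Fin.sum_univ_three, Mgen_apply] <;> simp [Prod.ext_iff, Fin.ext_iff] <;> ring

/-! ### Kronecker lifts -/

lemma kron_diag_one (d : Fin 3 × Fin 3 → ℝ) :
    Matrix.reindex assoc3 assoc3 (Matrix.diagonal d ⊗ₖ (1 : Matrix (Fin 3) (Fin 3) ℝ)) =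
      Matrix.diagonal (fun x : Fin 3 × Fin 3 × Fin 3 => d (x.1, x.2.1)) := by
  ext ⟨i,j,k⟩ ⟨i',j',k'⟩
  simp [assoc3, Matrix.diagonal_apply, Matrix.one_apply, Prod.ext_iff]
  split_ifs <;> simp_all

lemma kron_one_diag (d : Fin 3 × Fin 3 → ℝ) :
    (1 : Matrix (Fin 3) (Fin 3) ℝ) ⊗ₖ Matrix.diagonal d =
      Matrix.diagonal (fun x : Fin 3 × Fin 3 × Fin 3 => d x.2) := by
  ext ⟨i,x⟩ ⟨i',x'⟩
  simp [Matrix.diagonal_apply, Matrix.one_apply, Prod.ext_iff]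
  split_ifs <;> simp_all

lemma kron_Pm_one :
    Matrix.reindex assoc3 assoc3 (Pm S2 ⊗ₖ (1 : Matrix (Fin 3) (Fin 3) ℝ)) = Pm S12 := by
  ext ⟨i,j,k⟩ ⟨i',j',k'⟩
  simp [assoc3, Pm, S2, S12, Matrix.one_apply, Prod.ext_iff]
  split_ifs <;> simp_all

lemma kron_one_Pm :
    (1 : Matrix (Fin 3) (Fin 3) ℝ) ⊗ₖ Pm S2 = Pm S23 := by
  ext ⟨i,x⟩ ⟨i',x'⟩
  simp [Pm, S2, S23, Matrix.one_apply, Prod.ext_iff]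
  split_ifs <;> simp_all

/-- Decomposition of the generic `R12`. -/
lemma R12gen_decomp (aP aM bP bM cP cM : ℝ) :
    Matrix.reindex assoc3 assoc3 (Mgen aP aM bP bM cP cM ⊗ₖ (1 : Matrix (Fin 3) (Fin 3) ℝ)) =
      Matrix.diagonal (fun x : Fin 3 × Fin 3 × Fin 3 => Gd aP bP cP (x.1, x.2.1)) +
        Matrix.diagonal (fun x : Fin 3 × Fin 3 × Fin 3 => Hd aM bM cM (x.1, x.2.1)) * Pm S12 := by
  have h : (Matrix.diagonal (Hd aM bM cM) * Pm S2) ⊗ₖ (1 : Matrix (Fin 3) (Fin 3) ℝ) =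
      (Matrix.diagonal (Hd aM bM cM) ⊗ₖ (1 : Matrix (Fin 3) (Fin 3) ℝ)) *
        (Pm S2 ⊗ₖ (1 : Matrix (Fin 3) (Fin 3) ℝ)) := by
    rw [← Matrix.mul_kronecker_mul, one_mul]
  rw [Mgen_decomp, Matrix.add_kronecker, reindex_add, h, reindex_mul,
    kron_diag_one, kron_diag_one, kron_Pm_one]

/-- Decomposition of the generic `R23`. -/
lemma R23gen_decomp (aP aM bP bM cP cM : ℝ) :
    (1 : Matrix (Fin 3) (Fin 3) ℝ) ⊗ₖ Mgen aP aM bP bM cP cM =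
      Matrix.diagonal (fun x : Fin 3 × Fin 3 × Fin 3 => Gd aP bP cP x.2) +
        Matrix.diagonal (fun x : Fin 3 × Fin 3 × Fin 3 => Hd aM bM cM x.2) * Pm S23 := by
  have h : (1 : Matrix (Fin 3) (Fin 3) ℝ) ⊗ₖ (Matrix.diagonal (Hd aM bM cM) * Pm S2) =
      ((1 : Matrix (Fin 3) (Fin 3) ℝ) ⊗ₖ Matrix.diagonal (Hd aM bM cM)) *
        ((1 : Matrix (Fin 3) (Fin 3) ℝ) ⊗ₖ Pm S2) := by
    rw [← Matrix.mul_kronecker_mul, one_mul]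
  rw [Mgen_decomp, Matrix.kronecker_add, h, kron_one_diag, kron_one_diag, kron_one_Pm]

/-! ### Commutation and multiplicativity -/

lemma d12_S12 (p q r : ℝ) (w : Fin 3 × Fin 3 → ℝ)
    (h1 : ∀ i j, w (2 - i, j) = w (i, j)) (h2 : ∀ i j, w (i, 2 - j) = w (i, j)) :
    ∀ x : Fin 3 × Fin 3 × Fin 3, w ((S12 x).1, (S12 x).2.1) = w (x.1, x.2.1) := by
  rintro ⟨i, j, k⟩
  show w (2 - i, 2 - j) = w (i, j)
  rw [h1, h2]

lemma R12gen_comm_R23gen (aP aM bP bM cP cM aP' aM' bP' bM' cP' cM' : ℝ) :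
    Commute
      (Matrix.reindex assoc3 assoc3 (Mgen aP aM bP bM cP cM ⊗ₖ (1 : Matrix (Fin 3) (Fin 3) ℝ)))
      ((1 : Matrix (Fin 3) (Fin 3) ℝ) ⊗ₖ Mgen aP' aM' bP' bM' cP' cM') := by
  rw [R12gen_decomp, R23gen_decomp]
  -- symmetry facts
  have sG12 : ∀ x : Fin 3 × Fin 3 × Fin 3,
      (fun x : Fin 3 × Fin 3 × Fin 3 => Gd aP bP cP (x.1, x.2.1)) (S23 x)
        = Gd aP bP cP (x.1, x.2.1) := by
    rintro ⟨i, j, k⟩; exact Gd_flip2 _ _ _ _ _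
  have sH12 : ∀ x : Fin 3 × Fin 3 × Fin 3,
      (fun x : Fin 3 × Fin 3 × Fin 3 => Hd aM bM cM (x.1, x.2.1)) (S23 x)
        = Hd aM bM cM (x.1, x.2.1) := by
    rintro ⟨i, j, k⟩; exact Hd_flip2 _ _ _ _ _
  have sG23 : ∀ x : Fin 3 × Fin 3 × Fin 3,
      (fun x : Fin 3 × Fin 3 × Fin 3 => Gd aP' bP' cP' x.2) (S12 x)
        = Gd aP' bP' cP' x.2 := by
    rintro ⟨i, j, k⟩; exact Gd_flip1 _ _ _ _ _
  have sH23 : ∀ x : Fin 3 × Fin 3 × Fin 3,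
      (fun x : Fin 3 × Fin 3 × Fin 3 => Hd aM' bM' cM' x.2) (S12 x)
        = Hd aM' bM' cM' x.2 := by
    rintro ⟨i, j, k⟩; exact Hd_flip1 _ _ _ _ _
  have cPP : Commute (Pm S12) (Pm (n := Fin 3 × Fin 3 × Fin 3) S23) := by
    unfold Commute SemiconjBy
    rw [Pm_mul_Pm, Pm_mul_Pm, S12_trans_S23]
  have c1 : Commute (Matrix.diagonal fun x : Fin 3 × Fin 3 × Fin 3 => Gd aP bP cP (x.1, x.2.1))
      (Matrix.diagonal fun x : Fin 3 × Fin 3 × Fin 3 => Gd aP' bP' cP' x.2) := diag_comm _ _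
  have cG12P23 : Commute (Matrix.diagonal fun x : Fin 3 × Fin 3 × Fin 3 => Gd aP bP cP (x.1, x.2.1))
      (Pm S23) := commute_diagonal_Pm _ _ sG12
  have cH12P23 : Commute (Matrix.diagonal fun x : Fin 3 × Fin 3 × Fin 3 => Hd aM bM cM (x.1, x.2.1))
      (Pm S23) := commute_diagonal_Pm _ _ sH12
  have cG23P12 : Commute (Matrix.diagonal fun x : Fin 3 × Fin 3 × Fin 3 => Gd aP' bP' cP' x.2)
      (Pm S12) := commute_diagonal_Pm _ _ sG23
  have cH23P12 : Commute (Matrix.diagonal fun x : Fin 3 × Fin 3 × Fin 3 => Hd aM' bM' cM' x.2)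
      (Pm S12) := commute_diagonal_Pm _ _ sH23
  refine Commute.add_left (Commute.add_right ?_ ?_) (Commute.add_right ?_ ?_)
  · exact diag_comm _ _
  · exact Commute.mul_right (diag_comm _ _) cG12P23
  · exact Commute.mul_left (diag_comm _ _) cG23P12.symm
  · exact Commute.mul_left (Commute.mul_right (diag_comm _ _) cH12P23)
      (Commute.mul_right cH23P12.symm cPP)

/-! ### Rhat in generic form -/

lemma Rhat_eq_Mgen (m11p m11m m12p m12m m21p m21m θ : ℝ) :
    Rhat m11p m11m m12p m12m m21p m21m θ =
      Mgen ((Real.exp (m11p*θ) + Real.exp (m11m*θ))/2) ((Real.exp (m11p*θ) - Real.exp (m11m*θ))/2)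
        ((Real.exp (m12p*θ) + Real.exp (m12m*θ))/2) ((Real.exp (m12p*θ) - Real.exp (m12m*θ))/2)
        ((Real.exp (m21p*θ) + Real.exp (m21m*θ))/2) ((Real.exp (m21p*θ) - Real.exp (m21m*θ))/2) := rfl

lemma Rhat_mul (m11p m11m m12p m12m m21p m21m θ θ' : ℝ) :
    Rhat m11p m11m m12p m12m m21p m21m θ * Rhat m11p m11m m12p m12m m21p m21m θ' =
      Rhat m11p m11m m12p m12m m21p m21m (θ + θ') := by
  have e : ∀ a b : ℝ,
      ((Real.exp (a*θ) + Real.exp (b*θ))/2) * ((Real.exp (a*θ') + Real.exp (b*θ'))/2)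
        + ((Real.exp (a*θ) - Real.exp (b*θ))/2) * ((Real.exp (a*θ') - Real.exp (b*θ'))/2)
        = (Real.exp (a*(θ+θ')) + Real.exp (b*(θ+θ')))/2 := by
    intro a b; rw [mul_add a, mul_add b, Real.exp_add, Real.exp_add]; ring
  have eM : ∀ a b : ℝ,
      ((Real.exp (a*θ) + Real.exp (b*θ))/2) * ((Real.exp (a*θ') - Real.exp (b*θ'))/2)
        + ((Real.exp (a*θ) - Real.exp (b*θ))/2) * ((Real.exp (a*θ') + Real.exp (b*θ'))/2)
        = (Real.exp (a*(θ+θ')) - Real.exp (b*(θ+θ')))/2 := by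
    intro a b; rw [mul_add a, mul_add b, Real.exp_add, Real.exp_add]; ring
  rw [Rhat_eq_Mgen, Rhat_eq_Mgen, Rhat_eq_Mgen, Mgen_mul,
    e m11p m11m, eM m11p m11m, e m12p m12m, eM m12p m12m, e m21p m21m, eM m21p m21m]

/-! ### The main theorem -/

/-- For arbitrary real parameters, `R̂` satisfies the braid equation
`R̂₁₂(θ) R̂₂₃(θ+θ′) R̂₁₂(θ′) = R̂₂₃(θ′) R̂₁₂(θ+θ′) R̂₂₃(θ)`. -/
theorem Rhat_braid (m11p m11m m12p m12m m21p m21m : ℝ) (θ θ' : ℝ) :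
    R12 m11p m11m m12p m12m m21p m21m θ *
      R23 m11p m11m m12p m12m m21p m21m (θ + θ') *
      R12 m11p m11m m12p m12m m21p m21m θ' =
    R23 m11p m11m m12p m12m m21p m21m θ' *
      R12 m11p m11m m12p m12m m21p m21m (θ + θ') *
      R23 m11p m11m m12p m12m m21p m21m θ := by
  have comm : ∀ s t : ℝ,
      R12 m11p m11m m12p m12m m21p m21m s * R23 m11p m11m m12p m12m m21p m21m t =
        R23 m11p m11m m12p m12m m21p m21m t * R12 m11p m11m m12p m12m m21p m21m s := by
    intro s t
    unfold R12 R23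
    rw [Rhat_eq_Mgen m11p m11m m12p m12m m21p m21m s, Rhat_eq_Mgen m11p m11m m12p m12m m21p m21m t]
    exact R12gen_comm_R23gen _ _ _ _ _ _ _ _ _ _ _ _
  have mul12 : R12 m11p m11m m12p m12m m21p m21m θ * R12 m11p m11m m12p m12m m21p m21m θ' =
      R12 m11p m11m m12p m12m m21p m21m (θ + θ') := by
    unfold R12
    rw [← reindex_mul, ← Matrix.mul_kronecker_mul, one_mul, Rhat_mul]
  have mul23 : R23 m11p m11m m12p m12m m21p m21m θ' * R23 m11p m11m m12p m12m m21p m21m θ =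
      R23 m11p m11m m12p m12m m21p m21m (θ + θ') := by
    unfold R23
    rw [← Matrix.mul_kronecker_mul, one_mul, Rhat_mul, add_comm θ' θ]
  calc R12 m11p m11m m12p m12m m21p m21m θ * R23 m11p m11m m12p m12m m21p m21m (θ + θ') *
        R12 m11p m11m m12p m12m m21p m21m θ'
      = R12 m11p m11m m12p m12m m21p m21m θ * R12 m11p m11m m12p m12m m21p m21m θ' *
        R23 m11p m11m m12p m12m m21p m21m (θ + θ') := by
        rw [mul_assoc, ← comm, mul_assoc]
    _ = R12 m11p m11m m12p m12m m21p m21m (θ + θ') * R23 m11p m11m m12p m12m m21p m21m (θ + θ') := by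
        rw [mul12]
    _ = R23 m11p m11m m12p m12m m21p m21m θ' * R12 m11p m11m m12p m12m m21p m21m (θ + θ') *
        R23 m11p m11m m12p m12m m21p m21m θ := by
        rw [← mul23, ← mul_assoc, comm, mul_assoc]
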